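/- If q is a polynomial of degree at most d-1 satisfying q^(k)(-1) = u^(k)(-1) + O(h^{d-k}) for k = 0,...,k_d-1 and q(-1+kαh) = u(-1+kαh) + O(h^d) for k = 1,...,d-k_d, where u is a C^d function, then for any point x with |x - (-1)| ≤ C·h, |q(x) - u(x)| = O(h^d). -/

import Mathlib

open Polynomial

set_option maxHeartbeats 1000000


/-- Stability of the scaled Hermite interpolation problem. -/
theorem hermite_stability (d kd : ℕ) (hd : 1 ≤ d) (hkd : kd ≤ d) (α : ℝ) (hα : 0 < α) :
    ∃ B : ℝ, 0 ≤ B ∧ ∀ (c : Fin d → ℝ) (ε : ℝ), 0 ≤ ε →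
      (∀ j : Fin d, (j : ℕ) < kd → |(Nat.factorial (j:ℕ) : ℝ) * c j| ≤ ε) →
      (∀ j : Fin d, kd ≤ (j : ℕ) →
        |∑ i : Fin d, c i * ((((j : ℕ) - kd + 1 : ℕ) : ℝ) * α) ^ (i : ℕ)| ≤ ε) →
      ∀ i : Fin d, |c i| ≤ B * ε := by
  classical
  set M : Matrix (Fin d) (Fin d) ℝ := fun j i =>
    if (j : ℕ) < kd then (if i = j then (Nat.factorial (j:ℕ) : ℝ) else 0)
    else ((((j : ℕ) - kd + 1 : ℕ) : ℝ) * α) ^ (i : ℕ) with hM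
  set L : (Fin d → ℝ) →ₗ[ℝ] (Fin d → ℝ) := M.mulVecLin with hL
  have hLapp : ∀ (c : Fin d → ℝ) (j : Fin d),
      L c j = if (j : ℕ) < kd then (Nat.factorial (j:ℕ) : ℝ) * c j
        else ∑ i : Fin d, c i * ((((j : ℕ) - kd + 1 : ℕ) : ℝ) * α) ^ (i : ℕ) := by
    intro c j
    rw [hL, Matrix.mulVecLin_apply, Matrix.mulVec, dotProduct]
    by_cases hj : (j : ℕ) < kd
    · simp [hM, hj, Finset.sum_ite_eq', mul_comm]
    · simp [hM, hj, mul_comm]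
  have hinj : Function.Injective L := by
    rw [← LinearMap.ker_eq_bot, LinearMap.ker_eq_bot']
    intro c hc
    have hzero : ∀ j : Fin d, L c j = 0 := fun j => congrFun hc j
    -- coefficients below kd vanish
    have hlow : ∀ j : Fin d, (j : ℕ) < kd → c j = 0 := by
      intro j hj
      have := hzero j
      rw [hLapp c j, if_pos hj] at this
      have hfac : ((Nat.factorial (j:ℕ) : ℝ)) ≠ 0 := Nat.cast_ne_zero.mpr (Nat.factorial_ne_zero _)
      exact (mul_eq_zero.mp this).resolve_left hfac
    -- the polynomial s
    set s : Polynomial ℝ := ∑ i : Fin d, Polynomial.C (c i) * X ^ (i : ℕ) with hs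
    have hscoeff : ∀ i : Fin d, s.coeff (i : ℕ) = c i := by
      intro i
      rw [hs, finset_sum_coeff]
      rw [Finset.sum_eq_single i]
      · simp
      · intro b _ hb
        rw [coeff_C_mul, coeff_X_pow, if_neg (fun h => hb (Fin.ext h.symm)), mul_zero]
      · simp
    have hseval : ∀ t : ℝ, s.eval t = ∑ i : Fin d, c i * t ^ (i : ℕ) := by
      intro t; rw [hs]; simp [eval_finset_sum]
    have hs0 : s = 0 := by
      by_cases hkdd : kd = d
      · rw [hs]
        apply Finset.sum_eq_zero
        intro i _
        rw [hlow i (hkdd ▸ i.isLt), map_zero, zero_mul]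
      · have hkdlt : kd < d := lt_of_le_of_ne hkd hkdd
        -- X^kd divides s
        have hdvd : X ^ kd ∣ s := by
          rw [X_pow_dvd_iff]
          intro n hn
          by_cases hnd : n < d
          · have := hlow ⟨n, hnd⟩ hn
            have h2 := hscoeff ⟨n, hnd⟩
            simpa [this] using h2
          · rw [hs, finset_sum_coeff]
            apply Finset.sum_eq_zero
            intro i _
            rw [coeff_C_mul, coeff_X_pow, if_neg (by omega), mul_zero]
        obtain ⟨w, hw⟩ := hdvd
        by_contra hsne
        have hwne : w ≠ 0 := by rintro rfl; simp at hw; exact hsne hw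
        have hdegs : s.natDegree ≤ d - 1 := by
          rw [hs]
          apply Polynomial.natDegree_sum_le_of_forall_le
          intro i _
          apply le_trans (natDegree_C_mul_le _ _)
          simpa using Nat.le_sub_one_of_lt i.isLt
        have hdegw : w.natDegree < d - kd := by
          have : s.natDegree = kd + w.natDegree := by
            rw [hw, natDegree_mul (pow_ne_zero kd X_ne_zero) hwne, natDegree_X_pow]
          omega
        -- roots of w
        have hroots : ∀ k : ℕ, 1 ≤ k → k ≤ d - kd → w.IsRoot ((k : ℝ) * α) := by
          intro k hk1 hk2
          have hjlt : kd + (k - 1) < d := by omega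
          have := hzero ⟨kd + (k - 1), hjlt⟩
          rw [hLapp, if_neg (by simp)] at this
          have hval : ((kd + (k - 1) - kd + 1 : ℕ) : ℝ) = (k : ℝ) := by
            congr 1; omega
          rw [show ((⟨kd + (k - 1), hjlt⟩ : Fin d) : ℕ) = kd + (k - 1) from rfl, hval] at this
          have hseval' : s.eval ((k : ℝ) * α) = 0 := by rw [hseval]; exact this
          rw [hw] at hseval'
          simp only [eval_mul, eval_pow, eval_X] at hseval'
          have hkα : ((k : ℝ) * α) ≠ 0 := by positivity
          exact (mul_eq_zero.mp hseval').resolve_left (pow_ne_zero _ hkα)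
        -- too many roots
        have hsub : (Finset.Icc 1 (d - kd)).image (fun k : ℕ => (k : ℝ) * α) ⊆ w.roots.toFinset := by
          intro x hx
          rw [Finset.mem_image] at hx
          obtain ⟨k, hk, rfl⟩ := hx
          rw [Finset.mem_Icc] at hk
          rw [Multiset.mem_toFinset, mem_roots hwne]
          exact hroots k hk.1 hk.2
        have hcard : d - kd ≤ w.roots.toFinset.card := by
          have hinj2 : Set.InjOn (fun k : ℕ => (k : ℝ) * α) (Finset.Icc 1 (d - kd)) := by
            intro a _ b _ hab
            have : (a : ℝ) = b := by
              exact mul_right_cancel₀ (ne_of_gt hα) hab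
            exact_mod_cast this
          calc d - kd = (Finset.Icc 1 (d - kd)).card := by simp
            _ = ((Finset.Icc 1 (d - kd)).image _).card := (Finset.card_image_of_injOn hinj2).symm
            _ ≤ _ := Finset.card_le_card hsub
        have := (w.roots.toFinset_card_le).trans (w.card_roots')
        omega
    funext j
    rw [Pi.zero_apply, ← hscoeff j, hs0, coeff_zero]
  -- build the continuous inverse
  have hbij : Function.Bijective L := ⟨hinj, LinearMap.injective_iff_surjective.mp hinj⟩
  set e : (Fin d → ℝ) ≃ₗ[ℝ] (Fin d → ℝ) := LinearEquiv.ofBijective L hbij with he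
  set clm : (Fin d → ℝ) →L[ℝ] (Fin d → ℝ) :=
    LinearMap.toContinuousLinearMap e.symm.toLinearMap with hclm
  refine ⟨‖clm‖, norm_nonneg _, ?_⟩
  intro c ε hε h1 h2
  have hLc : ‖L c‖ ≤ ε := by
    rw [pi_norm_le_iff_of_nonneg hε]
    intro j
    rw [hLapp c j]
    by_cases hj : (j : ℕ) < kd
    · rw [if_pos hj]; exact h1 j hj
    · rw [if_neg hj]; exact h2 j (not_lt.mp hj)
  have hcnorm : ‖c‖ ≤ ‖clm‖ * ε := by
    have : c = clm (L c) := by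
      rw [hclm]
      show c = e.symm (L c)
      have : L c = e c := rfl
      rw [this, LinearEquiv.symm_apply_apply]
    calc ‖c‖ = ‖clm (L c)‖ := by rw [← this]
      _ ≤ ‖clm‖ * ‖L c‖ := clm.le_opNorm _
      _ ≤ ‖clm‖ * ε := by
          exact mul_le_mul_of_nonneg_left hLc (norm_nonneg _)
  intro i
  calc |c i| = ‖c i‖ := rfl
    _ ≤ ‖c‖ := norm_le_pi_norm c i
    _ ≤ ‖clm‖ * ε := hcnorm


theorem taylor_poly_bound (d : ℕ) (hd : 1 ≤ d) (u : ℝ → ℝ) (hu : ContDiff ℝ d u)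
    (Bnd : ℝ) (hB : 0 ≤ Bnd) :
    ∃ (T : Polynomial ℝ) (MT : ℝ), 0 ≤ MT ∧ T.natDegree < d ∧
      (∀ k, k < d → (Polynomial.derivative^[k] T).eval (-1) = iteratedDeriv k u (-1)) ∧
      ∀ δ : ℝ, 0 ≤ δ → δ ≤ Bnd → ∀ y : ℝ, |y - (-1)| ≤ δ →
        |u y - T.eval y| ≤ MT * δ ^ d := by
  classical
  set P : Polynomial ℝ := ∑ i ∈ Finset.range d,
    Polynomial.C (iteratedDeriv i u (-1) / (Nat.factorial i : ℝ)) * X ^ i with hP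
  set T : Polynomial ℝ := taylor 1 P with hT
  have hPcoeff : ∀ k, k < d → P.coeff k = iteratedDeriv k u (-1) / (Nat.factorial k : ℝ) := by
    intro k hk
    rw [hP, finset_sum_coeff, Finset.sum_eq_single k]
    · simp
    · intro b _ hb
      rw [coeff_C_mul, coeff_X_pow, if_neg (Ne.symm hb), mul_zero]
    · intro h; exact absurd (Finset.mem_range.mpr hk) h
  have hPdeg : P.natDegree ≤ d - 1 := by
    rw [hP]
    apply Polynomial.natDegree_sum_le_of_forall_le
    intro i hi
    apply le_trans (natDegree_C_mul_le _ _)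
    simpa using Nat.le_sub_one_of_lt (Finset.mem_range.mp hi)
  have hTdeg : T.natDegree < d := by
    rw [hT, natDegree_taylor]; omega
  have hTP : taylor (-1) T = P := by
    rw [hT, taylor_taylor]
    norm_num
  have hTderiv : ∀ k, k < d → (Polynomial.derivative^[k] T).eval (-1) = iteratedDeriv k u (-1) := by
    intro k hk
    have h1 : Polynomial.derivative^[k] T = (Nat.factorial k) • (hasseDeriv k T) := by
      rw [← factorial_smul_hasseDeriv]; rfl
    rw [h1, eval_smul, ← taylor_coeff, hTP, hPcoeff k hk]
    have : (Nat.factorial k : ℝ) ≠ 0 := Nat.cast_ne_zero.mpr (Nat.factorial_ne_zero _)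
    rw [nsmul_eq_mul]; field_simp
  -- sup bound for d-th derivative on a fixed compact set
  have hcont : Continuous (iteratedDeriv d u) :=
    hu.continuous_iteratedDeriv d (le_refl _)
  obtain ⟨MT0, hMT0⟩ : ∃ M0 : ℝ, ∀ y ∈ Set.Icc (-1 - Bnd) (-1 + Bnd), |iteratedDeriv d u y| ≤ M0 := by
    obtain ⟨M0, hM0⟩ := (isCompact_Icc (a := -1 - Bnd) (b := -1 + Bnd)).exists_bound_of_continuousOn
      (hcont.continuousOn)
    exact ⟨M0, hM0⟩
  set MT : ℝ := max MT0 0 with hMT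
  refine ⟨T, MT, le_max_right _ _, hTdeg, hTderiv, ?_⟩
  -- the iterated derivatives of g
  set g : ℝ → ℝ := fun y => u y - T.eval y with hg
  have hgiter : ∀ n, n ≤ d →
      iteratedDeriv n g = fun y => iteratedDeriv n u y - (Polynomial.derivative^[n] T).eval y := by
    intro n hn
    induction n with
    | zero => simp [hg]
    | succ m ih =>
      have hm : m ≤ d := le_of_lt (Nat.lt_of_succ_le hn)
      rw [iteratedDeriv_succ, ih hm]
      funext y
      have hdu : DifferentiableAt ℝ (iteratedDeriv m u) y := by
        have := hu.differentiable_iteratedDeriv m (by exact_mod_cast Nat.lt_of_succ_le hn)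
        exact this y
      have hdp : DifferentiableAt ℝ (fun y => (Polynomial.derivative^[m] T).eval y) y :=
        Polynomial.differentiableAt _
      rw [deriv_fun_sub hdu hdp, iteratedDeriv_succ]
      congr 1
      rw [Polynomial.deriv, Function.iterate_succ_apply']
  -- g's derivatives vanish at -1 up to order d-1, and d-th derivative equals u's
  have hgzero : ∀ m, m < d → iteratedDeriv m g (-1) = 0 := by
    intro m hm
    rw [hgiter m (le_of_lt hm)]
    simp [hTderiv m hm]
  have hgd : ∀ y, iteratedDeriv d g y = iteratedDeriv d u y := by
    intro y
    rw [hgiter d (le_refl _)]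
    simp [iterate_derivative_eq_zero hTdeg]
  -- the induction: |iteratedDeriv (d-k) g y| ≤ MT * δ^k on |y+1| ≤ δ
  have key : ∀ k, k ≤ d → ∀ δ, 0 ≤ δ → δ ≤ Bnd → ∀ y, |y - (-1)| ≤ δ →
      |iteratedDeriv (d - k) g y| ≤ MT * δ ^ k := by
    intro k
    induction k with
    | zero =>
      intro _ δ hδ0 hδB y hy
      rw [Nat.sub_zero, hgd y, pow_zero, mul_one]
      have hy' : y ∈ Set.Icc (-1 - Bnd) (-1 + Bnd) := by
        rw [Set.mem_Icc]
        have := abs_le.mp hy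
        constructor <;> linarith
      exact le_trans (hMT0 y hy') (le_max_left _ _)
    | succ k ih =>
      intro hk δ hδ0 hδB y hy
      have hk' : k ≤ d := le_of_lt (Nat.lt_of_succ_le hk)
      set m : ℕ := d - (k + 1) with hm
      have hmd : m < d := by omega
      have hmsucc : m + 1 = d - k := by omega
      -- MVT on Icc (-1-δ) (-1+δ)
      have hconv : Convex ℝ (Set.Icc (-1 - δ) (-1 + δ)) := convex_Icc _ _
      have hdiffg : ∀ z, DifferentiableAt ℝ (iteratedDeriv m g) z := by
        intro z
        rw [hgiter m (le_of_lt hmd)]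
        apply DifferentiableAt.sub
        · exact hu.differentiable_iteratedDeriv m (by exact_mod_cast hmd) z
        · exact Polynomial.differentiableAt _
      have hbound : ∀ z ∈ Set.Icc (-1 - δ) (-1 + δ), ‖iteratedDeriv (m + 1) g z‖ ≤ MT * δ ^ k := by
        intro z hz
        rw [hmsucc]
        apply ih hk' δ hδ0 hδB
        rw [Set.mem_Icc] at hz
        rw [abs_le]
        constructor <;> linarith [hz.1, hz.2]
      have hy1 : y ∈ Set.Icc (-1 - δ) (-1 + δ) := by
        rw [Set.mem_Icc]; have := abs_le.mp hy; constructor <;> linarith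
      have hy2 : (-1 : ℝ) ∈ Set.Icc (-1 - δ) (-1 + δ) := by
        rw [Set.mem_Icc]; constructor <;> linarith
      have := hconv.norm_image_sub_le_of_norm_hasDerivWithin_le
        (f := iteratedDeriv m g) (f' := iteratedDeriv (m + 1) g) (C := MT * δ ^ k)
        (fun z hz => by
          have : HasDerivAt (iteratedDeriv m g) (iteratedDeriv (m + 1) g z) z := by
            rw [iteratedDeriv_succ]
            exact (hdiffg z).hasDerivAt
          exact this.hasDerivWithinAt)
        hbound hy2 hy1
      rw [hgzero m hmd, sub_zero] at this
      calc |iteratedDeriv m g y| ≤ MT * δ ^ k * ‖y - (-1)‖ := this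
        _ ≤ MT * δ ^ k * δ := by
            apply mul_le_mul_of_nonneg_left hy
            positivity
        _ = MT * δ ^ (k + 1) := by ring
  intro δ hδ0 hδB y hy
  have := key d (le_refl _) δ hδ0 hδB y hy
  rw [Nat.sub_self, iteratedDeriv_zero] at this
  exact this

/-- `d`-th order accuracy of the Hermite extrapolation: if `q` of degree `≤ d-1`
matches `k_d` derivatives of a `C^d` function `u` at `-1` with errors `O(h^{d-k})`
and `d - k_d` point values at `-1 + k α h` with errors `O(h^d)`, then
`|q(x) - u(x)| = O(h^d)` for `|x - (-1)| ≤ C h`. -/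
theorem hermite_extrapolation_accuracy
    (d kd : ℕ) (hd : 1 ≤ d) (hkd : kd ≤ d)
    (α C A : ℝ) (hα : 0 < α) (hC : 0 < C) (hA : 0 ≤ A)
    (u : ℝ → ℝ) (hu : ContDiff ℝ d u) :
    ∃ K h₀ : ℝ, 0 < h₀ ∧ ∀ h : ℝ, 0 < h → h ≤ h₀ →
      ∀ q : Polynomial ℝ, q.degree < (d : ℕ) →
        (∀ k < kd,
          |(Polynomial.derivative^[k] q).eval (-1) - iteratedDeriv k u (-1)|
            ≤ A * h ^ (d - k)) →
        (∀ k : ℕ, 1 ≤ k → k ≤ d - kd →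
          |q.eval (-1 + (k : ℝ) * α * h) - u (-1 + (k : ℝ) * α * h)|
            ≤ A * h ^ d) →
        ∀ x : ℝ, |x - (-1)| ≤ C * h → |q.eval x - u x| ≤ K * h ^ d := by
  classical
  obtain ⟨Bs, hBs0, hBs⟩ := hermite_stability d kd hd hkd α hα
  set Bnd : ℝ := max C ((d : ℝ) * α) + 1 with hBnd
  have hBnd1 : 1 ≤ Bnd := by
    have : (0:ℝ) ≤ max C ((d : ℝ) * α) := le_trans (le_of_lt hC) (le_max_left _ _)
    linarith
  have hBnd0 : 0 ≤ Bnd := by linarith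
  obtain ⟨T, MT, hMT0, hTdeg, hTderiv, hTbound⟩ := taylor_poly_bound d hd u hu Bnd hBnd0
  set ε₀ : ℝ := A + MT * Bnd ^ d with hε₀
  have hε₀0 : 0 ≤ ε₀ := by positivity
  set Cm : ℝ := max 1 C with hCm
  refine ⟨Bs * ε₀ * ((d : ℝ) * Cm ^ d) + MT * Bnd ^ d, 1, one_pos, ?_⟩
  intro h hh0 hh1 q hqdeg hyp1 hyp2 x hx
  -- r := q - T
  set r : Polynomial ℝ := q - T with hr
  have hqnd : q.natDegree < d := by
    by_cases hq0 : q = 0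
    · simp [hq0]; omega
    · exact (natDegree_lt_iff_degree_lt hq0).mpr hqdeg
  have hrnd : r.natDegree < d :=
    lt_of_le_of_lt (natDegree_sub_le q T) (max_lt hqnd hTdeg)
  set b : ℕ → ℝ := fun i => (taylor (-1) r).coeff i with hb
  set c : Fin d → ℝ := fun i => b (i : ℕ) * h ^ (i : ℕ) with hc
  -- derivative data for r
  have hrderiv : ∀ k, k < d →
      (Nat.factorial k : ℝ) * b k = (Polynomial.derivative^[k] r).eval (-1) := by
    intro k hk
    have h1 : Polynomial.derivative^[k] r = (Nat.factorial k) • (hasseDeriv k r) := by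
      rw [← factorial_smul_hasseDeriv]; rfl
    rw [h1, eval_smul, ← taylor_coeff]
    simp [hb, nsmul_eq_mul]
  -- evaluation of r via b
  have hreval : ∀ t : ℝ, r.eval (-1 + t) = ∑ i : Fin d, b (i : ℕ) * t ^ (i : ℕ) := by
    intro t
    have h1 : r.eval (-1 + t) = (taylor (-1) r).eval t := by
      rw [taylor_eval]; ring_nf
    rw [h1, eval_eq_sum_range' (by rwa [natDegree_taylor]) t, ← Fin.sum_univ_eq_sum_range]
  -- the data bounds for c
  have hdata1 : ∀ j : Fin d, (j : ℕ) < kd →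
      |(Nat.factorial (j:ℕ) : ℝ) * c j| ≤ ε₀ * h ^ d := by
    intro j hj
    have hjd : (j : ℕ) < d := j.isLt
    have e1 : (Nat.factorial (j:ℕ) : ℝ) * c j
        = (Polynomial.derivative^[(j:ℕ)] r).eval (-1) * h ^ (j:ℕ) := by
      rw [hc, ← mul_assoc, hrderiv _ hjd]
    have e2 : (Polynomial.derivative^[(j:ℕ)] r).eval (-1)
        = (Polynomial.derivative^[(j:ℕ)] q).eval (-1) - iteratedDeriv (j:ℕ) u (-1) := by
      rw [hr, iterate_derivative_sub, eval_sub, hTderiv _ hjd]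
    rw [e1, e2, abs_mul, abs_pow, abs_of_pos hh0]
    calc |(Polynomial.derivative^[(j:ℕ)] q).eval (-1) - iteratedDeriv (j:ℕ) u (-1)| * h ^ (j:ℕ)
        ≤ (A * h ^ (d - (j:ℕ))) * h ^ (j:ℕ) := by
          apply mul_le_mul_of_nonneg_right (hyp1 _ hj) (by positivity)
      _ = A * h ^ d := by rw [mul_assoc, ← pow_add]; congr 2; omega
      _ ≤ ε₀ * h ^ d := by
          apply mul_le_mul_of_nonneg_right _ (by positivity)
          rw [hε₀]; nlinarith [pow_nonneg hBnd0 d]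
  have hdata2 : ∀ j : Fin d, kd ≤ (j : ℕ) →
      |∑ i : Fin d, c i * ((((j : ℕ) - kd + 1 : ℕ) : ℝ) * α) ^ (i : ℕ)| ≤ ε₀ * h ^ d := by
    intro j hj
    set k : ℕ := (j : ℕ) - kd + 1 with hk
    have hk1 : 1 ≤ k := by omega
    have hk2 : k ≤ d - kd := by have := j.isLt; omega
    have hkd' : (k : ℝ) ≤ (d : ℝ) := by
      have : k ≤ d := by omega
      exact_mod_cast this
    have e1 : ∑ i : Fin d, c i * (((k : ℕ) : ℝ) * α) ^ (i : ℕ)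
        = r.eval (-1 + (k : ℝ) * α * h) := by
      rw [hreval ((k : ℝ) * α * h)]
      apply Finset.sum_congr rfl
      intro i _
      rw [hc]
      ring
    rw [e1, hr, eval_sub]
    have e2 : q.eval (-1 + (k:ℝ) * α * h) - T.eval (-1 + (k:ℝ) * α * h)
        = (q.eval (-1 + (k:ℝ) * α * h) - u (-1 + (k:ℝ) * α * h))
          + (u (-1 + (k:ℝ) * α * h) - T.eval (-1 + (k:ℝ) * α * h)) := by ring
    rw [e2]
    have hT2 : |u (-1 + (k:ℝ) * α * h) - T.eval (-1 + (k:ℝ) * α * h)| ≤ MT * (Bnd * h) ^ d := by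
      apply hTbound (Bnd * h) (by positivity)
      · nlinarith
      · rw [show (-1 + (k:ℝ) * α * h - -1) = (k:ℝ) * α * h by ring,
          abs_of_nonneg (by positivity)]
        have h1 : (k:ℝ) * α ≤ (d:ℝ) * α := by nlinarith
        have h2 : (d:ℝ) * α ≤ Bnd := by
          rw [hBnd]; have := le_max_right C ((d:ℝ)*α); linarith
        nlinarith
    calc |_ + _| ≤ |q.eval (-1 + (k:ℝ) * α * h) - u (-1 + (k:ℝ) * α * h)|
          + |u (-1 + (k:ℝ) * α * h) - T.eval (-1 + (k:ℝ) * α * h)| := abs_add_le _ _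
      _ ≤ A * h ^ d + MT * (Bnd * h) ^ d := add_le_add (hyp2 k hk1 hk2) hT2
      _ = ε₀ * h ^ d := by rw [hε₀, mul_pow]; ring
  -- stability gives coefficient bounds
  have hcoef : ∀ i : Fin d, |c i| ≤ Bs * (ε₀ * h ^ d) :=
    hBs c (ε₀ * h ^ d) (by positivity) hdata1 hdata2
  -- final estimate
  have hxB : |x - (-1)| ≤ Bnd * h := by
    have : C ≤ Bnd := by
      rw [hBnd]; have := le_max_left C ((d:ℝ)*α); linarith
    nlinarith
  have hrx : |r.eval x| ≤ Bs * ε₀ * ((d : ℝ) * Cm ^ d) * h ^ d := by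
    have e1 : r.eval x = ∑ i : Fin d, b (i : ℕ) * (x + 1) ^ (i : ℕ) := by
      have := hreval (x + 1)
      rwa [show -1 + (x + 1) = x by ring] at this
    rw [e1]
    calc |∑ i : Fin d, b (i:ℕ) * (x+1) ^ (i:ℕ)|
        ≤ ∑ i : Fin d, |b (i:ℕ) * (x+1) ^ (i:ℕ)| := Finset.abs_sum_le_sum_abs _ _
      _ ≤ ∑ i : Fin d, Bs * ε₀ * Cm ^ d * h ^ d := by
          apply Finset.sum_le_sum
          intro i _
          rw [abs_mul, abs_pow]
          have hx1 : |x + 1| ≤ C * h := by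
            rw [show x + 1 = x - (-1) by ring]; exact hx
          have h1 : |b (i:ℕ)| * |x+1| ^ (i:ℕ) ≤ |b (i:ℕ)| * (C * h) ^ (i:ℕ) := by
            apply mul_le_mul_of_nonneg_left _ (abs_nonneg _)
            exact pow_le_pow_left₀ (abs_nonneg _) hx1 _
          apply le_trans h1
          have h2 : |b (i:ℕ)| * (C * h) ^ (i:ℕ) = |c i| * C ^ (i:ℕ) := by
            rw [hc, abs_mul, abs_pow, abs_of_pos hh0, mul_pow]; ring
          rw [h2]
          have h3 : |c i| * C ^ (i:ℕ) ≤ (Bs * (ε₀ * h ^ d)) * Cm ^ (i:ℕ) := by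
            apply mul_le_mul (hcoef i) _ (by positivity) (by positivity)
            exact pow_le_pow_left₀ (le_of_lt hC) (le_max_right 1 C) _
          apply le_trans h3
          have h4 : Cm ^ (i:ℕ) ≤ Cm ^ d := by
            apply pow_le_pow_right₀ (le_max_left 1 C) (le_of_lt i.isLt)
          calc Bs * (ε₀ * h ^ d) * Cm ^ (i:ℕ) ≤ Bs * (ε₀ * h ^ d) * Cm ^ d := by
                apply mul_le_mul_of_nonneg_left h4 (by positivity)
            _ = Bs * ε₀ * Cm ^ d * h ^ d := by ring
      _ = (d : ℝ) * (Bs * ε₀ * Cm ^ d * h ^ d) := by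
          rw [Finset.sum_const, Finset.card_univ, Fintype.card_fin, nsmul_eq_mul]
      _ = Bs * ε₀ * ((d : ℝ) * Cm ^ d) * h ^ d := by ring
  have hux : |u x - T.eval x| ≤ MT * Bnd ^ d * h ^ d := by
    have := hTbound (Bnd * h) (by positivity) (by nlinarith) x hxB
    calc |u x - T.eval x| ≤ MT * (Bnd * h) ^ d := this
      _ = MT * Bnd ^ d * h ^ d := by rw [mul_pow]; ring
  have efinal : q.eval x - u x = r.eval x - (u x - T.eval x) := by
    rw [hr, eval_sub]; ring
  rw [efinal]
  calc |r.eval x - (u x - T.eval x)| ≤ |r.eval x| + |u x - T.eval x| := abs_sub _ _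
    _ ≤ Bs * ε₀ * ((d : ℝ) * Cm ^ d) * h ^ d + MT * Bnd ^ d * h ^ d :=
        add_le_add hrx hux
    _ = (Bs * ε₀ * ((d : ℝ) * Cm ^ d) + MT * Bnd ^ d) * h ^ d := by ring
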